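/- Consider the LTI system ẋ(t) = A11 x(t) + A12 y(t) + B1 u(t), ẏ(t) = A21 x(t) + A22 y(t) + B2 u(t) along a continuous input u, with differentiable x : ℝ → ℝ^{n_x}, y : ℝ → ℝ^{n_y}. Let T1 ∈ ℝ^{n_z × n_x} have rank n_x, let T2 ∈ ℝ^{n_z × n_y} satisfy T1 A11 + T2 A21 = 0, and let χ : ℝ → ℝ^{n_z} be differentiable with χ'(t) = (T1 A12 + T2 A22) y(t) + (T1 B1 + T2 B2) u(t). Set T1† := (T1ᵀT1)⁻¹T1ᵀ and θ := T1 x(0) + T2 y(0) − χ(0). Then for all t ≥ 0: y'(t) = A21 T1† χ(t) + (A22 − A21 T1† T2) y(t) + B2 u(t) + A21 T1† θ. -/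

import Mathlib

open Matrix

/-- **Linear regression form of the output for LTI systems (claim (C3) of Proposition 2).**
Along trajectories of the LTI system, if `rank T1 = nx`, `T1 A11 + T2 A21 = 0`, and
`χ̇ = (T1 A12 + T2 A22) y + (T1 B1 + T2 B2) u`, then with `T1† := (T1ᵀT1)⁻¹T1ᵀ` and
`θ := T1 x(0) + T2 y(0) − χ(0)` one has, for all `t ≥ 0`,
`ẏ(t) = A21 T1† χ(t) + (A22 − A21 T1† T2) y(t) + B2 u(t) + A21 T1† θ`. -/
theorem stmt6 {nx ny nz m : ℕ}
    (A11 : Matrix (Fin nx) (Fin nx) ℝ) (A12 : Matrix (Fin nx) (Fin ny) ℝ)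
    (A21 : Matrix (Fin ny) (Fin nx) ℝ) (A22 : Matrix (Fin ny) (Fin ny) ℝ)
    (B1 : Matrix (Fin nx) (Fin m) ℝ) (B2 : Matrix (Fin ny) (Fin m) ℝ)
    (u : ℝ → Fin m → ℝ) (hu : Continuous u)
    (x : ℝ → Fin nx → ℝ) (y : ℝ → Fin ny → ℝ)
    (hx : ∀ t : ℝ, HasDerivAt x (A11 *ᵥ x t + A12 *ᵥ y t + B1 *ᵥ u t) t)
    (hy : ∀ t : ℝ, HasDerivAt y (A21 *ᵥ x t + A22 *ᵥ y t + B2 *ᵥ u t) t)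
    (T1 : Matrix (Fin nz) (Fin nx) ℝ) (T2 : Matrix (Fin nz) (Fin ny) ℝ)
    (hrank : T1.rank = nx) (halg : T1 * A11 + T2 * A21 = 0)
    (χ : ℝ → Fin nz → ℝ)
    (hχ : ∀ t : ℝ,
      HasDerivAt χ ((T1 * A12 + T2 * A22) *ᵥ y t + (T1 * B1 + T2 * B2) *ᵥ u t) t)
    (T1d : Matrix (Fin nx) (Fin nz) ℝ) (hT1d : T1d = (T1ᵀ * T1)⁻¹ * T1ᵀ)
    (θ : Fin nz → ℝ) (hθ : θ = T1 *ᵥ x 0 + T2 *ᵥ y 0 - χ 0) :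
    ∀ t : ℝ, 0 ≤ t →
      HasDerivAt y
        (A21 *ᵥ (T1d *ᵥ χ t) + (A22 - A21 * T1d * T2) *ᵥ y t + B2 *ᵥ u t +
          A21 *ᵥ (T1d *ᵥ θ)) t := by
  classical
  -- T1ᵀ * T1 is a unit
  have hker : LinearMap.ker T1.mulVecLin = ⊥ := by
    have h1 := LinearMap.finrank_range_add_finrank_ker T1.mulVecLin
    have h2 : Module.finrank ℝ (LinearMap.range T1.mulVecLin) = nx := hrank
    rw [h2] at h1
    simp only [Module.finrank_pi, Fintype.card_fin] at h1
    have : Module.finrank ℝ (LinearMap.ker T1.mulVecLin) = 0 := by omega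
    exact Submodule.finrank_eq_zero.mp this
  have hunit : IsUnit (T1ᵀ * T1) := by
    rw [← mulVec_injective_iff_isUnit]
    have : LinearMap.ker (T1ᵀ * T1).mulVecLin = ⊥ := by
      rw [ker_mulVecLin_transpose_mul_self]; exact hker
    have hinj := LinearMap.ker_eq_bot.mp this
    intro a b hab
    exact hinj hab
  have hT1dT1 : T1d * T1 = 1 := by
    rw [hT1d, Matrix.mul_assoc, Matrix.nonsing_inv_mul _ ((isUnit_iff_isUnit_det _).mp hunit)]
  -- derivative of matrix-vector products
  have hmv : ∀ {p q : ℕ} (M : Matrix (Fin p) (Fin q) ℝ) (f : ℝ → Fin q → ℝ)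
      (f' : Fin q → ℝ) (t : ℝ), HasDerivAt f f' t →
      HasDerivAt (fun s => M *ᵥ f s) (M *ᵥ f') t := by
    intro p q M f f' t hf
    have := (M.mulVecLin.toContinuousLinearMap.hasFDerivAt
      (x := f t)).comp_hasDerivAt t hf
    exact this
  -- g := T1 x + T2 y - χ is constant
  set g : ℝ → Fin nz → ℝ := fun s => T1 *ᵥ x s + T2 *ᵥ y s - χ s with hg
  have hg' : ∀ s : ℝ, HasDerivAt g 0 s := by
    intro s
    have h := ((hmv T1 x _ s (hx s)).add (hmv T2 y _ s (hy s))).sub (hχ s)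
    have heq : T1 *ᵥ (A11 *ᵥ x s + A12 *ᵥ y s + B1 *ᵥ u s) +
        T2 *ᵥ (A21 *ᵥ x s + A22 *ᵥ y s + B2 *ᵥ u s) -
        ((T1 * A12 + T2 * A22) *ᵥ y s + (T1 * B1 + T2 * B2) *ᵥ u s) =
        (T1 * A11 + T2 * A21) *ᵥ x s := by
      simp only [mulVec_add, mulVec_mulVec, add_mulVec]
      abel
    rw [heq, halg, zero_mulVec] at h
    exact h
  have hconst : ∀ s : ℝ, g s = θ := by
    intro s
    have := is_const_of_deriv_eq_zero (fun s => (hg' s).differentiableAt)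
      (fun s => (hg' s).deriv) s 0
    rw [this, hθ]
  intro t _
  have hxt : x t = T1d *ᵥ (θ + χ t - T2 *ᵥ y t) := by
    have h1 : T1 *ᵥ x t = θ + χ t - T2 *ᵥ y t := by
      have := hconst t
      simp only [hg] at this
      rw [← this]; abel
    rw [← h1, mulVec_mulVec, hT1dT1, one_mulVec]
  have hfinal : A21 *ᵥ (T1d *ᵥ χ t) + (A22 - A21 * T1d * T2) *ᵥ y t + B2 *ᵥ u t +
      A21 *ᵥ (T1d *ᵥ θ) = A21 *ᵥ x t + A22 *ᵥ y t + B2 *ᵥ u t := by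
    rw [hxt]
    simp only [mulVec_add, mulVec_sub, sub_mulVec, mulVec_mulVec, Matrix.mul_assoc]
    abel
  rw [hfinal]
  exact hy t
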